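/- There is an absolute constant C>0 such that, in the kernel setting of the context (unit speed, r>0, t>0, λ₋=|t−r|, λ₊=t+r, δ=min{r,1/2}), for every λ with λ₋<λ<λ₊ one has ∫_{−φ}^{φ} K₁(λ,ψ;r,t) dψ = 2∫₀¹ K₂(λ,τ;r,t) dτ ≤ (C/(rλ)^{1/2}) log( 2 + rλ·h(t−r) / ((λ−λ₋)(λ₊−λ)) ), where h(p)=1 for p>0 and h(p)=0 for p≤0. -/

import Mathlib

open Real intervalIntegral

noncomputable section

/-- `φ(λ; r, t) = arccos((r² + λ² − t²)/(2rλ))`. -/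
def phiK (l r t : ℝ) : ℝ := Real.arccos ((r ^ 2 + l ^ 2 - t ^ 2) / (2 * r * l))

/-- `K₁(λ, ψ; r, t) = 1/(2π √(t² − r² − λ² + 2rλ cos ψ))`. -/
def K1 (l ψ r t : ℝ) : ℝ :=
  1 / (2 * Real.pi * Real.sqrt (t ^ 2 - r ^ 2 - l ^ 2 + 2 * r * l * Real.cos ψ))

/-- `K₂(λ, τ; r, t) = 1/(2π √(2rλτ(1−τ)(2−(1−cos φ)τ)))`. -/
def K2 (l τ r t : ℝ) : ℝ :=
  1 / (2 * Real.pi *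
    Real.sqrt (2 * r * l * τ * (1 - τ) * (2 - (1 - Real.cos (phiK l r t)) * τ)))

/-- `Ψ(λ, τ; r, t) = arccos(1 − (1 − cos φ)τ)`. -/
def PsiK (l τ r t : ℝ) : ℝ := Real.arccos (1 - (1 - Real.cos (phiK l r t)) * τ)

namespace Stmt10Aux

open MeasureTheory Set

variable {r t l : ℝ}

lemma rpow_neg_half (s : ℝ) (hs : 0 ≤ s) : s ^ (-(1/2) : ℝ) = 1 / Real.sqrt s := by
  rw [Real.rpow_neg hs, Real.sqrt_eq_rpow]; exact (one_div _).symm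

lemma l_pos (h1 : |t - r| < l) : 0 < l := (abs_nonneg _).trans_lt h1

lemma u_lt (hr : 0 < r) (ht : 0 < t) (h1 : |t - r| < l) (h2 : l < t + r) :
    (r ^ 2 + l ^ 2 - t ^ 2) / (2 * r * l) < 1 := by
  have hl := l_pos h1
  have habs := abs_lt.mp h1
  rw [div_lt_one (by positivity)]
  nlinarith [mul_pos (show (0:ℝ) < t - r + l by linarith) (show (0:ℝ) < t + r - l by linarith)]

lemma u_gt (hr : 0 < r) (ht : 0 < t) (h1 : |t - r| < l) :
    -1 < (r ^ 2 + l ^ 2 - t ^ 2) / (2 * r * l) := by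
  have hl := l_pos h1
  have habs := abs_lt.mp h1
  rw [lt_div_iff₀ (by positivity)]
  nlinarith [mul_pos (show (0:ℝ) < r + l - t by linarith) (show (0:ℝ) < r + l + t by linarith)]

lemma cos_phiK (hr : 0 < r) (ht : 0 < t) (h1 : |t - r| < l) (h2 : l < t + r) :
    Real.cos (phiK l r t) = (r ^ 2 + l ^ 2 - t ^ 2) / (2 * r * l) :=
  Real.cos_arccos (u_gt hr ht h1).le (u_lt hr ht h1 h2).le

lemma a_pos (hr : 0 < r) (ht : 0 < t) (h1 : |t - r| < l) (h2 : l < t + r) :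
    0 < 1 - Real.cos (phiK l r t) := by
  rw [cos_phiK hr ht h1 h2]; linarith [u_lt hr ht h1 h2]

lemma a_lt (hr : 0 < r) (ht : 0 < t) (h1 : |t - r| < l) (h2 : l < t + r) :
    1 - Real.cos (phiK l r t) < 2 := by
  rw [cos_phiK hr ht h1 h2]; linarith [u_gt hr ht h1]

lemma radicand (hr : 0 < r) (ht : 0 < t) (h1 : |t - r| < l) (h2 : l < t + r) (τ : ℝ) :
    t ^ 2 - r ^ 2 - l ^ 2 + 2 * r * l * (1 - (1 - Real.cos (phiK l r t)) * τ)
      = 2 * r * l * ((1 - Real.cos (phiK l r t)) * (1 - τ)) := by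
  have hl := l_pos h1
  rw [cos_phiK hr ht h1 h2]
  field_simp
  ring

lemma psi_deriv (hr : 0 < r) (ht : 0 < t) (h1 : |t - r| < l) (h2 : l < t + r)
    {τ : ℝ} (hτ : τ ∈ Ioo (0:ℝ) 1) :
    HasDerivAt (fun τ => PsiK l τ r t)
      ((1 - Real.cos (phiK l r t)) /
        Real.sqrt (1 - (1 - (1 - Real.cos (phiK l r t)) * τ) ^ 2)) τ := by
  have ha0 := a_pos hr ht h1 h2
  have ha2 := a_lt hr ht h1 h2
  set a := 1 - Real.cos (phiK l r t) with ha
  have hg : HasDerivAt (fun τ : ℝ => 1 - a * τ) (-a) τ := by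
    simpa using ((hasDerivAt_id τ).const_mul a).const_sub 1
  have hx1 : 1 - a * τ ≠ -1 := by nlinarith [hτ.1, hτ.2]
  have hx2 : 1 - a * τ ≠ 1 := by nlinarith [hτ.1, hτ.2]
  have hcomp := (Real.hasDerivAt_arccos hx1 hx2).comp τ hg
  simp only [Function.comp_def] at hcomp
  have : (-(1 / Real.sqrt (1 - (1 - a * τ) ^ 2))) * (-a)
      = a / Real.sqrt (1 - (1 - a * τ) ^ 2) := by ring
  rw [this] at hcomp
  exact hcomp

lemma psi_image (hr : 0 < r) (ht : 0 < t) (h1 : |t - r| < l) (h2 : l < t + r) :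
    (fun τ => PsiK l τ r t) '' Ioo 0 1 = Ioo 0 (phiK l r t) := by
  have hu1 := u_gt hr ht h1
  have hu2 := u_lt hr ht h1 h2
  have hcos := cos_phiK hr ht h1 h2
  set u := (r ^ 2 + l ^ 2 - t ^ 2) / (2 * r * l) with hu
  have hφ : phiK l r t = Real.arccos u := rfl
  have hφ0 : 0 ≤ phiK l r t := Real.arccos_nonneg u
  have hφπ : phiK l r t ≤ π := Real.arccos_le_pi u
  ext ψ
  simp only [mem_image, mem_Ioo, PsiK, hcos]
  constructor
  · rintro ⟨τ, ⟨hτ0, hτ1⟩, rfl⟩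
    have harg1 : 1 - (1 - u) * τ < 1 := by nlinarith
    have harg2 : u < 1 - (1 - u) * τ := by nlinarith
    refine ⟨Real.arccos_pos.2 harg1, ?_⟩
    rw [hφ]
    exact Real.strictAntiOn_arccos ⟨by linarith, by linarith⟩ ⟨by linarith, by linarith⟩ harg2
  · rintro ⟨hψ0, hψφ⟩
    have hψπ : ψ ≤ π := hψφ.le.trans hφπ
    have hcψ1 : Real.cos ψ < 1 := by
      have := Real.strictAntiOn_cos ⟨le_refl 0, Real.pi_pos.le⟩ ⟨hψ0.le, hψπ⟩ hψ0
      simpa using this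
    have hcψ2 : u < Real.cos ψ := by
      have := Real.strictAntiOn_cos ⟨hψ0.le, hψπ⟩ ⟨hφ0, hφπ⟩ hψφ
      rwa [hcos] at this
    have ha0 : 0 < 1 - u := by linarith
    refine ⟨(1 - Real.cos ψ) / (1 - u), ⟨div_pos (by linarith) ha0, ?_⟩, ?_⟩
    · rw [div_lt_one ha0]; linarith
    · have harg : 1 - (1 - u) * ((1 - Real.cos ψ) / (1 - u)) = Real.cos ψ := by
        field_simp
        ring
      rw [harg, Real.arccos_cos hψ0.le hψπ]

lemma psi_injOn (hr : 0 < r) (ht : 0 < t) (h1 : |t - r| < l) (h2 : l < t + r) :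
    InjOn (fun τ => PsiK l τ r t) (Ioo 0 1) := by
  have ha0 := a_pos hr ht h1 h2
  have ha2 := a_lt hr ht h1 h2
  set a := 1 - Real.cos (phiK l r t) with ha
  intro x hx y hy hxy
  simp only [PsiK, ← ha] at hxy
  have hmx : 1 - a * x ∈ Icc (-1:ℝ) 1 := by
    constructor <;> nlinarith [hx.1, hx.2]
  have hmy : 1 - a * y ∈ Icc (-1:ℝ) 1 := by
    constructor <;> nlinarith [hy.1, hy.2]
  have := Real.arccos_injOn hmx hmy hxy
  have hax : a * x = a * y := by linarith
  exact mul_left_cancel₀ (ne_of_gt ha0) hax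

lemma pointwise (hr : 0 < r) (ht : 0 < t) (h1 : |t - r| < l) (h2 : l < t + r)
    {τ : ℝ} (hτ : τ ∈ Ioo (0:ℝ) 1) :
    |(1 - Real.cos (phiK l r t)) /
        Real.sqrt (1 - (1 - (1 - Real.cos (phiK l r t)) * τ) ^ 2)| •
      K1 l (PsiK l τ r t) r t = K2 l τ r t := by
  have hl := l_pos h1
  have ha0 := a_pos hr ht h1 h2
  have ha2 := a_lt hr ht h1 h2
  have hrad := radicand hr ht h1 h2 τ
  set a := 1 - Real.cos (phiK l r t) with ha
  obtain ⟨hτ0, hτ1⟩ := hτ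
  have h2aτ : 0 < 2 - a * τ := by nlinarith
  have hcosPsi : Real.cos (PsiK l τ r t) = 1 - a * τ := by
    rw [PsiK, ← ha]
    exact Real.cos_arccos (by nlinarith) (by nlinarith)
  have hA : 0 < a * τ * (2 - a * τ) := by positivity
  have hB : 0 < 2 * r * l * (a * (1 - τ)) := by
    have : 0 < 1 - τ := by linarith
    positivity
  have hZ : 0 < 2 * r * l * τ * (1 - τ) * (2 - a * τ) := by
    have : 0 < 1 - τ := by linarith
    positivity
  have hsq : 1 - (1 - a * τ) ^ 2 = a * τ * (2 - a * τ) := by ring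
  have hkey : Real.sqrt (a * τ * (2 - a * τ)) * Real.sqrt (2 * r * l * (a * (1 - τ)))
      = a * Real.sqrt (2 * r * l * τ * (1 - τ) * (2 - a * τ)) := by
    rw [← Real.sqrt_mul hA.le]
    rw [show a * τ * (2 - a * τ) * (2 * r * l * (a * (1 - τ)))
        = a ^ 2 * (2 * r * l * τ * (1 - τ) * (2 - a * τ)) by ring]
    rw [Real.sqrt_mul (sq_nonneg a), Real.sqrt_sq ha0.le]
  have hsA : 0 < Real.sqrt (a * τ * (2 - a * τ)) := Real.sqrt_pos.2 hA
  have hsB : 0 < Real.sqrt (2 * r * l * (a * (1 - τ))) := Real.sqrt_pos.2 hB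
  have hsZ : 0 < Real.sqrt (2 * r * l * τ * (1 - τ) * (2 - a * τ)) := Real.sqrt_pos.2 hZ
  rw [K1, K2, hcosPsi, hrad, hsq, ← ha, smul_eq_mul,
    abs_of_nonneg (by positivity)]
  rw [div_mul_div_comm]
  rw [show Real.sqrt (a * τ * (2 - a * τ)) * (2 * π * Real.sqrt (2 * r * l * (a * (1 - τ))))
      = 2 * π * (Real.sqrt (a * τ * (2 - a * τ)) * Real.sqrt (2 * r * l * (a * (1 - τ)))) by ring,
    hkey]
  rw [mul_one]
  rw [show (2:ℝ) * π * (a * Real.sqrt (2 * r * l * τ * (1 - τ) * (2 - a * τ)))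
      = a * (2 * π * Real.sqrt (2 * r * l * τ * (1 - τ) * (2 - a * τ))) by ring]
  rw [div_mul_cancel_left₀ (ne_of_gt ha0), one_div]

/-- change of variables: the half-interval integral of K1 equals the K2 integral. -/
lemma half_eq (hr : 0 < r) (ht : 0 < t) (h1 : |t - r| < l) (h2 : l < t + r) :
    ∫ ψ in Ioo 0 (phiK l r t), K1 l ψ r t = ∫ τ in Ioo (0:ℝ) 1, K2 l τ r t := by
  rw [← psi_image hr ht h1 h2,
    integral_image_eq_integral_abs_deriv_smul measurableSet_Ioo
      (fun τ hτ => (psi_deriv hr ht h1 h2 hτ).hasDerivWithinAt)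
      (psi_injOn hr ht h1 h2)]
  exact setIntegral_congr_fun measurableSet_Ioo fun τ hτ => pointwise hr ht h1 h2 hτ

/-- The `J`-integral bound: `∫_0^{1/2} ds/√(s(s+b)) ≤ 2 + log(2+1/b)`. -/
lemma J_bound {b : ℝ} (hb : 0 < b) :
    IntervalIntegrable (fun s => 1 / Real.sqrt (s * (s + b))) volume 0 (1/2) ∧
    ∫ s in (0:ℝ)..(1/2), 1 / Real.sqrt (s * (s + b)) ≤ 2 + Real.log (2 + 1/b) := by
  have hmeas : ∀ c d : ℝ, AEStronglyMeasurable (fun s => 1 / Real.sqrt (s * (s + b)))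
      (volume.restrict (Set.uIoc c d)) := by
    intro c d
    apply Measurable.aestronglyMeasurable
    apply Measurable.div measurable_const
    exact (Real.continuous_sqrt.comp (by continuity)).measurable
  -- pointwise bounds
  have hnn : ∀ s : ℝ, 0 ≤ 1 / Real.sqrt (s * (s + b)) := fun s => by positivity
  have hbound : ∀ s : ℝ, 0 < s → 1 / Real.sqrt (s * (s + b))
      ≤ (1 / Real.sqrt b) * s ^ (-(1/2) : ℝ) := by
    intro s hs
    have h1 : Real.sqrt (s * b) ≤ Real.sqrt (s * (s + b)) :=
      Real.sqrt_le_sqrt (by nlinarith)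
    have h2 : 0 < Real.sqrt (s * b) := Real.sqrt_pos.2 (by positivity)
    calc 1 / Real.sqrt (s * (s + b)) ≤ 1 / Real.sqrt (s * b) :=
          one_div_le_one_div_of_le h2 h1
      _ = (1 / Real.sqrt b) * s ^ (-(1/2) : ℝ) := by
          rw [Real.sqrt_mul hs.le, rpow_neg_half s hs.le]
          rw [one_div, one_div, one_div, mul_inv]
          ring
  -- the comparison function is integrable
  have hgint : IntervalIntegrable (fun s : ℝ => (1 / Real.sqrt b) * s ^ (-(1/2) : ℝ))
      volume 0 (1/2) :=
    (intervalIntegrable_rpow' (by norm_num)).const_mul _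
  have hfint : IntervalIntegrable (fun s => 1 / Real.sqrt (s * (s + b))) volume 0 (1/2) := by
    rw [intervalIntegrable_iff_integrableOn_Ioc_of_le (by norm_num)]
    have hg' : IntegrableOn (fun s : ℝ => (1 / Real.sqrt b) * s ^ (-(1/2) : ℝ))
        (Ioc (0:ℝ) (1/2)) volume := by
      rw [← intervalIntegrable_iff_integrableOn_Ioc_of_le (by norm_num)]
      exact hgint
    apply Integrable.mono' hg'
    · have := hmeas 0 (1/2)
      rwa [Set.uIoc_of_le (by norm_num : (0:ℝ) ≤ 1/2)] at this
    · rw [ae_restrict_iff' measurableSet_Ioc]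
      filter_upwards with s hs
      rw [Real.norm_eq_abs, abs_of_nonneg (hnn s)]
      exact hbound s hs.1
  refine ⟨hfint, ?_⟩
  -- value of ∫ s^(-1/2) over 0..c for c ≥ 0
  have hval : ∀ c : ℝ, 0 ≤ c → ∫ s in (0:ℝ)..c, s ^ (-(1/2) : ℝ) = 2 * Real.sqrt c := by
    intro c hc
    rw [integral_rpow (Or.inl (by norm_num))]
    rw [Real.zero_rpow (by norm_num)]
    rw [show (-(1/2) : ℝ) + 1 = 1/2 by norm_num]
    rw [← Real.sqrt_eq_rpow]
    ring
  have hlog_nonneg : (0:ℝ) ≤ Real.log (2 + 1/b) := by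
    apply Real.log_nonneg
    have : (0:ℝ) ≤ 1/b := by positivity
    linarith
  by_cases hb2 : b < 1/2
  · -- split at b
    have hsub1 : Set.uIcc (0:ℝ) b ⊆ Set.uIcc (0:ℝ) (1/2) := by
      rw [Set.uIcc_of_le hb.le, Set.uIcc_of_le (by norm_num : (0:ℝ) ≤ 1/2)]
      exact Set.Icc_subset_Icc le_rfl hb2.le
    have hsub2 : Set.uIcc b (1/2) ⊆ Set.uIcc (0:ℝ) (1/2) := by
      rw [Set.uIcc_of_le hb2.le, Set.uIcc_of_le (by norm_num : (0:ℝ) ≤ 1/2)]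
      exact Set.Icc_subset_Icc hb.le le_rfl
    have hf1 := hfint.mono_set hsub1
    have hf2 := hfint.mono_set hsub2
    rw [← integral_add_adjacent_intervals hf1 hf2]
    have hpiece1 : ∫ s in (0:ℝ)..b, 1 / Real.sqrt (s * (s + b)) ≤ 2 := by
      have hg1 : IntervalIntegrable (fun s : ℝ => (1 / Real.sqrt b) * s ^ (-(1/2) : ℝ))
          volume 0 b := (intervalIntegrable_rpow' (by norm_num)).const_mul _
      calc ∫ s in (0:ℝ)..b, 1 / Real.sqrt (s * (s + b))
          ≤ ∫ s in (0:ℝ)..b, (1 / Real.sqrt b) * s ^ (-(1/2) : ℝ) := by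
            apply integral_mono_on hb.le hf1 hg1
            intro s hs
            rcases eq_or_lt_of_le hs.1 with h | h
            · subst h
              simp [Real.sqrt_eq_zero', Real.zero_rpow (show (-(1/2):ℝ) ≠ 0 by norm_num)]
            · exact hbound s h
        _ = (1 / Real.sqrt b) * (2 * Real.sqrt b) := by
            rw [intervalIntegral.integral_const_mul, hval b hb.le]
        _ = 2 := by
            have : Real.sqrt b ≠ 0 := (Real.sqrt_pos.2 hb).ne'
            field_simp
    have hpiece2 : ∫ s in b..(1/2), 1 / Real.sqrt (s * (s + b)) ≤ Real.log (2 + 1/b) := by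
      have honediv : IntervalIntegrable (fun s : ℝ => 1 / s) volume b (1/2) := by
        apply intervalIntegrable_one_div
        · intro x hx
          rw [Set.uIcc_of_le hb2.le] at hx
          exact (lt_of_lt_of_le hb hx.1).ne'
        · exact continuousOn_id
      calc ∫ s in b..(1/2), 1 / Real.sqrt (s * (s + b))
          ≤ ∫ s in b..(1/2), 1 / s := by
            apply integral_mono_on hb2.le hf2 honediv
            intro s hs
            have hs0 : 0 < s := lt_of_lt_of_le hb hs.1
            have h1 : Real.sqrt (s * s) ≤ Real.sqrt (s * (s + b)) :=
              Real.sqrt_le_sqrt (by nlinarith)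
            rw [show s * s = s ^ 2 by ring, Real.sqrt_sq hs0.le] at h1
            exact one_div_le_one_div_of_le hs0 h1
        _ = Real.log ((1/2) / b) := by
            apply integral_one_div
            rw [Set.uIcc_of_le hb2.le]
            intro hmem
            exact absurd hmem.1 (not_le.2 hb)
        _ ≤ Real.log (2 + 1/b) := by
            apply Real.log_le_log (by positivity)
            rw [div_le_iff₀ hb]
            have : (0:ℝ) < 1/b := by positivity
            field_simp
            nlinarith
    linarith
  · -- b ≥ 1/2 : crude bound
    push_neg at hb2
    calc ∫ s in (0:ℝ)..(1/2), 1 / Real.sqrt (s * (s + b))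
        ≤ ∫ s in (0:ℝ)..(1/2), (1 / Real.sqrt b) * s ^ (-(1/2) : ℝ) := by
          apply integral_mono_on (by norm_num) hfint hgint
          intro s hs
          rcases eq_or_lt_of_le hs.1 with h | h
          · subst h
            simp [Real.sqrt_eq_zero', Real.zero_rpow (show (-(1/2):ℝ) ≠ 0 by norm_num)]
          · exact hbound s h
      _ = (1 / Real.sqrt b) * (2 * Real.sqrt (1/2)) := by
          rw [intervalIntegral.integral_const_mul, hval (1/2) (by norm_num)]
      _ ≤ 2 := by
          have h12 : Real.sqrt (1/2) ≤ Real.sqrt b := Real.sqrt_le_sqrt hb2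
          have hsb : 0 < Real.sqrt b := Real.sqrt_pos.2 hb
          rw [div_mul_eq_mul_div, one_mul, div_le_iff₀ hsb]
          calc 2 * Real.sqrt (1/2) ≤ 2 * Real.sqrt b := by linarith
            _ = 2 * Real.sqrt b := rfl
      _ ≤ 2 + Real.log (2 + 1/b) := by linarith


lemma int_rpow_half (c : ℝ) (hc : 0 ≤ c) :
    ∫ s in (0:ℝ)..c, s ^ (-(1/2) : ℝ) = 2 * Real.sqrt c := by
  rw [integral_rpow (Or.inl (by norm_num))]
  rw [Real.zero_rpow (by norm_num)]
  rw [show (-(1/2) : ℝ) + 1 = 1/2 by norm_num]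
  rw [← Real.sqrt_eq_rpow]
  ring

lemma K2_nonneg (τ : ℝ) : 0 ≤ K2 l τ r t := by rw [K2]; positivity

lemma K2_meas : ∀ s : Set ℝ, AEStronglyMeasurable (fun τ => K2 l τ r t)
    (volume.restrict s) := by
  intro s
  apply Measurable.aestronglyMeasurable
  apply Measurable.div measurable_const
  exact (continuous_const.mul (Real.continuous_sqrt.comp (by continuity))).measurable

lemma K2_bound1 (hr : 0 < r) (ht : 0 < t) (h1 : |t - r| < l) (h2 : l < t + r)
    {τ : ℝ} (hτ : τ ∈ Ioc (0:ℝ) (1/2)) :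
    K2 l τ r t ≤ (1 / (2 * π * Real.sqrt (r * l))) * τ ^ (-(1/2) : ℝ) := by
  have hl := l_pos h1
  have ha0 := a_pos hr ht h1 h2
  have ha2 := a_lt hr ht h1 h2
  set a := 1 - Real.cos (phiK l r t) with ha
  obtain ⟨hτ0, hτh⟩ := hτ
  have hZ1 : r * l * τ ≤ 2 * r * l * τ * (1 - τ) * (2 - a * τ) := by
    have hf2 : (1:ℝ) ≤ 2 - a * τ := by nlinarith
    have hprod : (1:ℝ) ≤ 2 * (1 - τ) * (2 - a * τ) := by nlinarith
    nlinarith [mul_le_mul_of_nonneg_left hprod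
      (le_of_lt (mul_pos (mul_pos hr hl) hτ0))]
  have hs1 : Real.sqrt (r * l * τ) ≤ Real.sqrt (2 * r * l * τ * (1 - τ) * (2 - a * τ)) :=
    Real.sqrt_le_sqrt hZ1
  have hpos : 0 < 2 * π * Real.sqrt (r * l * τ) := by positivity
  calc K2 l τ r t ≤ 1 / (2 * π * Real.sqrt (r * l * τ)) := by
        rw [K2, ← ha]
        apply one_div_le_one_div_of_le hpos
        have : 0 ≤ 2 * π := by positivity
        nlinarith [hs1]
    _ = (1 / (2 * π * Real.sqrt (r * l))) * τ ^ (-(1/2) : ℝ) := by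
        rw [Real.sqrt_mul (by positivity : (0:ℝ) ≤ r * l), rpow_neg_half τ hτ0.le]
        rw [div_mul_div_comm, mul_one]
        ring_nf

lemma K2_bound2 (hr : 0 < r) (ht : 0 < t) (h1 : |t - r| < l) (h2 : l < t + r)
    {τ : ℝ} (hτ : τ ∈ Ioc (1/2:ℝ) 1) :
    K2 l τ r t ≤ (1 / (2 * π * Real.sqrt (r * l / 2))) *
      (1 / Real.sqrt ((1 - τ) * ((1 - τ) + (1 + Real.cos (phiK l r t))))) := by
  have hl := l_pos h1
  have ha0 := a_pos hr ht h1 h2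
  have ha2 := a_lt hr ht h1 h2
  set a := 1 - Real.cos (phiK l r t) with ha
  have hbb : 1 + Real.cos (phiK l r t) = 2 - a := by rw [ha]; ring
  rw [hbb]
  obtain ⟨hτh, hτ1⟩ := hτ
  rcases eq_or_lt_of_le hτ1 with h | hτ1'
  · subst h
    have hL : K2 l 1 r t = 0 := by rw [K2]; norm_num
    rw [hL]
    positivity
  · have hs : (0:ℝ) < 1 - τ := by linarith
    have haux : (2 - a) + (1 - τ) ≤ 2 * (2 - a * τ) := by nlinarith
    have h2aτ : 0 < 2 - a * τ := by nlinarith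
    have hZ2 : r * l / 2 * ((1 - τ) * ((1 - τ) + (2 - a)))
        ≤ 2 * r * l * τ * (1 - τ) * (2 - a * τ) := by
      have hm1 : (1 - τ) * ((2 - a) + (1 - τ)) ≤ (1 - τ) * (2 * (2 - a * τ)) :=
        mul_le_mul_of_nonneg_left haux hs.le
      have hm2 : (1 - τ) * (2 * (2 - a * τ)) ≤ 2 * τ * ((1 - τ) * (2 * (2 - a * τ))) := by
        nlinarith [mul_nonneg hs.le h2aτ.le]
      nlinarith [mul_le_mul_of_nonneg_left (hm1.trans hm2)
        (le_of_lt (by positivity : (0:ℝ) < r * l / 2))]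
    have hX : 0 < (1 - τ) * ((1 - τ) + (2 - a)) := by nlinarith
    have hs2 : Real.sqrt (r * l / 2 * ((1 - τ) * ((1 - τ) + (2 - a))))
        ≤ Real.sqrt (2 * r * l * τ * (1 - τ) * (2 - a * τ)) := Real.sqrt_le_sqrt hZ2
    have hpos : 0 < 2 * π * Real.sqrt (r * l / 2 * ((1 - τ) * ((1 - τ) + (2 - a)))) := by
      positivity
    calc K2 l τ r t ≤ 1 / (2 * π * Real.sqrt (r * l / 2 * ((1 - τ) * ((1 - τ) + (2 - a))))) := by
          rw [K2, ← ha]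
          apply one_div_le_one_div_of_le hpos
          have : 0 ≤ 2 * π := by positivity
          nlinarith [hs2]
      _ = (1 / (2 * π * Real.sqrt (r * l / 2))) *
            (1 / Real.sqrt ((1 - τ) * ((1 - τ) + (2 - a)))) := by
          rw [Real.sqrt_mul (by positivity : (0:ℝ) ≤ r * l / 2)]
          rw [div_mul_div_comm, mul_one]
          ring_nf

lemma b_pos (hr : 0 < r) (ht : 0 < t) (h1 : |t - r| < l) (h2 : l < t + r) :
    0 < 1 + Real.cos (phiK l r t) := by
  have := u_gt hr ht h1
  rw [cos_phiK hr ht h1 h2]; linarith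

lemma K2_pieces (hr : 0 < r) (ht : 0 < t) (h1 : |t - r| < l) (h2 : l < t + r) :
    IntegrableOn (fun τ => K2 l τ r t) (Ioc (0:ℝ) 1) ∧
    ∫ τ in Ioo (0:ℝ) 1, K2 l τ r t
      ≤ (1 / Real.sqrt (r * l)) *
          (3 + Real.log (2 + 1 / (1 + Real.cos (phiK l r t)))) := by
  have hl := l_pos h1
  have hb := b_pos hr ht h1 h2
  set b := 1 + Real.cos (phiK l r t) with hbdef
  obtain ⟨hJint, hJval⟩ := J_bound hb
  set c1 : ℝ := 1 / (2 * π * Real.sqrt (r * l)) with hc1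
  set c2 : ℝ := 1 / (2 * π * Real.sqrt (r * l / 2)) with hc2
  -- comparison functions
  have hg1int : IntervalIntegrable (fun τ : ℝ => c1 * τ ^ (-(1/2) : ℝ)) volume 0 (1/2) :=
    (intervalIntegrable_rpow' (by norm_num)).const_mul _
  have hg2int : IntervalIntegrable
      (fun τ : ℝ => c2 * (1 / Real.sqrt ((1 - τ) * ((1 - τ) + b)))) volume (1/2) 1 := by
    have := (hJint.comp_sub_left 1).symm
    simp only [sub_zero, show (1:ℝ) - 1/2 = 1/2 by norm_num] at this
    exact this.const_mul c2
  -- integrability of K2 on the two pieces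
  have hK1int : IntegrableOn (fun τ => K2 l τ r t) (Ioc (0:ℝ) (1/2)) := by
    apply Integrable.mono'
      ((intervalIntegrable_iff_integrableOn_Ioc_of_le (by norm_num : (0:ℝ) ≤ 1/2)).1 hg1int)
      (K2_meas _)
    rw [ae_restrict_iff' measurableSet_Ioc]
    filter_upwards with τ hτ
    rw [Real.norm_eq_abs, abs_of_nonneg (K2_nonneg τ)]
    exact K2_bound1 hr ht h1 h2 hτ
  have hK2int : IntegrableOn (fun τ => K2 l τ r t) (Ioc (1/2:ℝ) 1) := by
    apply Integrable.mono'
      ((intervalIntegrable_iff_integrableOn_Ioc_of_le (by norm_num : (1/2:ℝ) ≤ 1)).1 hg2int)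
      (K2_meas _)
    rw [ae_restrict_iff' measurableSet_Ioc]
    filter_upwards with τ hτ
    rw [Real.norm_eq_abs, abs_of_nonneg (K2_nonneg τ)]
    exact K2_bound2 hr ht h1 h2 hτ
  have hunion : Ioc (0:ℝ) (1/2) ∪ Ioc (1/2:ℝ) 1 = Ioc (0:ℝ) 1 :=
    Set.Ioc_union_Ioc_eq_Ioc (by norm_num) (by norm_num)
  have hdisj : Disjoint (Ioc (0:ℝ) (1/2)) (Ioc (1/2:ℝ) 1) := by
    rw [Set.disjoint_left]
    rintro x ⟨_, hx⟩ ⟨hx', _⟩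
    linarith
  have hint : IntegrableOn (fun τ => K2 l τ r t) (Ioc (0:ℝ) 1) := by
    rw [← hunion]
    exact hK1int.union hK2int
  refine ⟨hint, ?_⟩
  -- value bounds
  have hsrl : (0:ℝ) < Real.sqrt (r * l) := Real.sqrt_pos.2 (by positivity)
  have hP1 : ∫ τ in Ioc (0:ℝ) (1/2), K2 l τ r t ≤ 1 / Real.sqrt (r * l) := by
    have hmono : ∫ τ in Ioc (0:ℝ) (1/2), K2 l τ r t
        ≤ ∫ τ in Ioc (0:ℝ) (1/2), c1 * τ ^ (-(1/2) : ℝ) := by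
      apply setIntegral_mono_on hK1int
        ((intervalIntegrable_iff_integrableOn_Ioc_of_le (by norm_num : (0:ℝ) ≤ 1/2)).1 hg1int)
        measurableSet_Ioc
      exact fun τ hτ => K2_bound1 hr ht h1 h2 hτ
    have hval : ∫ τ in Ioc (0:ℝ) (1/2), c1 * τ ^ (-(1/2) : ℝ)
        = c1 * (2 * Real.sqrt (1/2)) := by
      rw [← intervalIntegral.integral_of_le (by norm_num : (0:ℝ) ≤ 1/2),
        intervalIntegral.integral_const_mul, int_rpow_half _ (by norm_num)]
    have hfin : c1 * (2 * Real.sqrt (1/2)) ≤ 1 / Real.sqrt (r * l) := by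
      rw [hc1]
      rw [div_mul_eq_mul_div, one_mul, div_le_div_iff₀ (by positivity) hsrl]
      have hs2 : Real.sqrt (1/2) ≤ 1 := by
        rw [show (1:ℝ) = Real.sqrt 1 by rw [Real.sqrt_one]]
        exact Real.sqrt_le_sqrt (by norm_num)
      nlinarith [Real.pi_gt_three, hsrl]
    linarith
  have hP2 : ∫ τ in Ioc (1/2:ℝ) 1, K2 l τ r t
      ≤ (1 / Real.sqrt (r * l)) * (2 + Real.log (2 + 1/b)) := by
    have hmono : ∫ τ in Ioc (1/2:ℝ) 1, K2 l τ r t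
        ≤ ∫ τ in Ioc (1/2:ℝ) 1, c2 * (1 / Real.sqrt ((1 - τ) * ((1 - τ) + b))) := by
      apply setIntegral_mono_on hK2int
        ((intervalIntegrable_iff_integrableOn_Ioc_of_le (by norm_num : (1/2:ℝ) ≤ 1)).1 hg2int)
        measurableSet_Ioc
      exact fun τ hτ => K2_bound2 hr ht h1 h2 hτ
    have hval : ∫ τ in Ioc (1/2:ℝ) 1, c2 * (1 / Real.sqrt ((1 - τ) * ((1 - τ) + b)))
        = c2 * ∫ s in (0:ℝ)..(1/2), 1 / Real.sqrt (s * (s + b)) := by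
      rw [← intervalIntegral.integral_of_le (by norm_num : (1/2:ℝ) ≤ 1),
        intervalIntegral.integral_const_mul]
      congr 1
      have := intervalIntegral.integral_comp_sub_left
        (fun s => 1 / Real.sqrt (s * (s + b))) 1 (a := 1/2) (b := 1)
      simp only [sub_self, show (1:ℝ) - 1/2 = 1/2 by norm_num] at this
      rw [this]
    have hc2le : c2 ≤ 1 / Real.sqrt (r * l) := by
      rw [hc2]
      apply one_div_le_one_div_of_le hsrl
      have key : Real.sqrt (r * l) ≤ 2 * π * Real.sqrt (r * l / 2) := by
        have h1' : 2 * π * Real.sqrt (r * l / 2)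
            = Real.sqrt ((2 * π) ^ 2 * (r * l / 2)) := by
          rw [Real.sqrt_mul (by positivity), Real.sqrt_sq (by positivity)]
        rw [h1']
        apply Real.sqrt_le_sqrt
        nlinarith [Real.pi_gt_three, mul_pos hr hl, sq_nonneg (π - 3),
          mul_pos (mul_pos hr hl) (mul_pos Real.pi_pos Real.pi_pos)]
      exact key
    have hJnn : (0:ℝ) ≤ 2 + Real.log (2 + 1/b) := by
      have : (0:ℝ) ≤ Real.log (2 + 1/b) := Real.log_nonneg (by
        have : (0:ℝ) ≤ 1/b := by positivity
        linarith)
      linarith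
    calc ∫ τ in Ioc (1/2:ℝ) 1, K2 l τ r t
        ≤ c2 * ∫ s in (0:ℝ)..(1/2), 1 / Real.sqrt (s * (s + b)) := by rw [← hval]; exact hmono
      _ ≤ c2 * (2 + Real.log (2 + 1/b)) := by
          apply mul_le_mul_of_nonneg_left hJval
          rw [hc2]; positivity
      _ ≤ (1 / Real.sqrt (r * l)) * (2 + Real.log (2 + 1/b)) :=
          mul_le_mul_of_nonneg_right hc2le hJnn
  have hIoo : ∫ τ in Ioo (0:ℝ) 1, K2 l τ r t = ∫ τ in Ioc (0:ℝ) 1, K2 l τ r t :=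
    setIntegral_congr_set Ioo_ae_eq_Ioc
  have hsplit : ∫ τ in Ioc (0:ℝ) 1, K2 l τ r t
      = (∫ τ in Ioc (0:ℝ) (1/2), K2 l τ r t) + ∫ τ in Ioc (1/2:ℝ) 1, K2 l τ r t := by
    rw [← hunion, setIntegral_union hdisj measurableSet_Ioc hK1int hK2int]
  rw [hIoo, hsplit]
  have : (1 / Real.sqrt (r * l)) * (3 + Real.log (2 + 1/b))
      = 1 / Real.sqrt (r * l) + (1 / Real.sqrt (r * l)) * (2 + Real.log (2 + 1/b)) := by ring
  rw [this]
  exact add_le_add hP1 hP2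

lemma K1_even (ψ : ℝ) : K1 l (-ψ) r t = K1 l ψ r t := by
  rw [K1, K1, Real.cos_neg]

lemma K1_intOn (hr : 0 < r) (ht : 0 < t) (h1 : |t - r| < l) (h2 : l < t + r) :
    IntegrableOn (fun ψ => K1 l ψ r t) (Ioo 0 (phiK l r t)) := by
  rw [← psi_image hr ht h1 h2,
    integrableOn_image_iff_integrableOn_abs_deriv_smul measurableSet_Ioo
      (fun τ hτ => (psi_deriv hr ht h1 h2 hτ).hasDerivWithinAt)
      (psi_injOn hr ht h1 h2)]
  exact (((K2_pieces hr ht h1 h2).1.mono_set Set.Ioo_subset_Ioc_self).congr_fun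
    (fun τ hτ => (pointwise hr ht h1 h2 hτ).symm) measurableSet_Ioo)

end Stmt10Aux

open MeasureTheory

/-- the kernel identity and logarithmic bound. -/
theorem stmt10 :
    ∃ C : ℝ, 0 < C ∧ ∀ r t l : ℝ, 0 < r → 0 < t → |t - r| < l → l < t + r →
      (∫ ψ in (-(phiK l r t))..(phiK l r t), K1 l ψ r t)
          = 2 * ∫ τ in (0:ℝ)..1, K2 l τ r t
        ∧ (∫ ψ in (-(phiK l r t))..(phiK l r t), K1 l ψ r t)
          ≤ C / Real.sqrt (r * l) *
              Real.log (2 + r * l * (if 0 < t - r then (1:ℝ) else 0) /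
                ((l - |t - r|) * ((t + r) - l))) := by
  refine ⟨28, by norm_num, fun r t l hr ht h1 h2 => ?_⟩
  have hl := Stmt10Aux.l_pos h1
  have hφ0 : 0 ≤ phiK l r t := Real.arccos_nonneg _
  have hB := Stmt10Aux.b_pos hr ht h1 h2
  have habs := abs_lt.mp h1
  -- interval integrability of K1
  have hintK1 : IntervalIntegrable (fun ψ => K1 l ψ r t) volume 0 (phiK l r t) := by
    rw [intervalIntegrable_iff_integrableOn_Ioo_of_le hφ0]
    exact Stmt10Aux.K1_intOn hr ht h1 h2
  have heqfun : (fun x : ℝ => K1 l (-x) r t) = fun x => K1 l x r t :=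
    funext fun x => Stmt10Aux.K1_even x
  have hintK1neg : IntervalIntegrable (fun ψ => K1 l ψ r t) volume (-(phiK l r t)) 0 := by
    have h' := (hintK1.comp_sub_left 0).symm
    simp only [zero_sub, sub_self] at h'
    rwa [heqfun] at h'
  -- evenness
  have hnegeq : (∫ ψ in (-(phiK l r t))..0, K1 l ψ r t)
      = ∫ ψ in (0:ℝ)..(phiK l r t), K1 l ψ r t := by
    have h := intervalIntegral.integral_comp_neg (a := 0) (b := phiK l r t)
      (fun x => K1 l x r t)
    rw [show (fun x : ℝ => (fun x => K1 l x r t) (-x)) = fun x => K1 l x r t from heqfun] at h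
    simp only [neg_zero] at h
    exact h.symm
  have hsplit := intervalIntegral.integral_add_adjacent_intervals hintK1neg hintK1
  have hdouble : (∫ ψ in (-(phiK l r t))..(phiK l r t), K1 l ψ r t)
      = 2 * ∫ ψ in (0:ℝ)..(phiK l r t), K1 l ψ r t := by
    rw [← hsplit, hnegeq]; ring
  have hhalf : (∫ ψ in (0:ℝ)..(phiK l r t), K1 l ψ r t) = ∫ τ in (0:ℝ)..1, K2 l τ r t := by
    rw [intervalIntegral.integral_of_le hφ0, intervalIntegral.integral_of_le zero_le_one]
    calc ∫ ψ in Set.Ioc 0 (phiK l r t), K1 l ψ r t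
        = ∫ ψ in Set.Ioo 0 (phiK l r t), K1 l ψ r t :=
          (MeasureTheory.setIntegral_congr_set MeasureTheory.Ioo_ae_eq_Ioc).symm
      _ = ∫ τ in Set.Ioo (0:ℝ) 1, K2 l τ r t := Stmt10Aux.half_eq hr ht h1 h2
      _ = ∫ τ in Set.Ioc (0:ℝ) 1, K2 l τ r t :=
          MeasureTheory.setIntegral_congr_set MeasureTheory.Ioo_ae_eq_Ioc
  refine ⟨by rw [hdouble, hhalf], ?_⟩
  -- the bound
  have hS := (Stmt10Aux.K2_pieces hr ht h1 h2).2
  have hLHS : (∫ ψ in (-(phiK l r t))..(phiK l r t), K1 l ψ r t)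
      = 2 * ∫ τ in Set.Ioo (0:ℝ) 1, K2 l τ r t := by
    rw [hdouble, hhalf, intervalIntegral.integral_of_le zero_le_one,
      ← MeasureTheory.setIntegral_congr_set MeasureTheory.Ioo_ae_eq_Ioc]
  have hBval : 1 + Real.cos (phiK l r t) = (r + l - t) * (r + l + t) / (2 * r * l) := by
    rw [Stmt10Aux.cos_phiK hr ht h1 h2]
    field_simp
    ring
  suffices h : ∀ y : ℝ, 0 ≤ y →
      Real.log (2 + 1 / (1 + Real.cos (phiK l r t))) ≤ 2 * Real.log (2 + y) →
      (∫ ψ in (-(phiK l r t))..(phiK l r t), K1 l ψ r t)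
        ≤ 28 / Real.sqrt (r * l) * Real.log (2 + y) by
    by_cases hc : 0 < t - r
    · rw [if_pos hc, abs_of_pos hc]
      have hD1 : (0:ℝ) < l - (t - r) := by
        have := abs_of_pos hc
        linarith [habs.2]
      have hD2 : (0:ℝ) < t + r - l := by linarith
      set y := r * l * 1 / ((l - (t - r)) * (t + r - l)) with hy
      have hy0 : 0 ≤ y := le_of_lt (div_pos (by positivity) (mul_pos hD1 hD2))
      apply h y hy0
      have hP1 : (0:ℝ) < (r + l - t) * (r + l + t) := mul_pos (by linarith) (by linarith)
      have hD : (0:ℝ) < (l - (t - r)) * (t + r - l) := mul_pos hD1 hD2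
      have hB1 : 1 / (1 + Real.cos (phiK l r t)) ≤ 2 * y := by
        rw [hBval, one_div_div, hy, div_le_iff₀ hP1]
        rw [show 2 * (r * l * 1 / ((l - (t - r)) * (t + r - l))) * ((r + l - t) * (r + l + t))
            = 2 * r * l * ((r + l - t) * (r + l + t)) / ((l - (t - r)) * (t + r - l)) by ring]
        rw [le_div_iff₀ hD]
        nlinarith [mul_nonneg (mul_nonneg (mul_pos hr hl).le hl.le) hD1.le]
      have h2B : 2 + 1 / (1 + Real.cos (phiK l r t)) ≤ (2 + y) ^ 2 := by
        nlinarith [sq_nonneg y]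
      have hlog := Real.log_le_log (by positivity) h2B
      rwa [Real.log_pow, Nat.cast_ofNat] at hlog
    · rw [if_neg hc, mul_zero, zero_div]
      apply h 0 le_rfl
      have htr : t ≤ r := by linarith [not_lt.mp hc]
      have hBhalf : (1:ℝ)/2 ≤ 1 + Real.cos (phiK l r t) := by
        rw [hBval, le_div_iff₀ (by positivity)]
        nlinarith [mul_nonneg (sub_nonneg.2 htr) (show (0:ℝ) ≤ r + t by linarith),
          mul_pos hr hl, sq_nonneg l]
      have hB1 : 1 / (1 + Real.cos (phiK l r t)) ≤ 2 := by
        calc 1 / (1 + Real.cos (phiK l r t)) ≤ 1 / (1/2) :=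
              one_div_le_one_div_of_le (by norm_num) hBhalf
          _ = 2 := by norm_num
      have h2B : 2 + 1 / (1 + Real.cos (phiK l r t)) ≤ (2 + 0:ℝ) ^ 2 := by nlinarith
      have hlog := Real.log_le_log (by positivity) h2B
      rwa [Real.log_pow, Nat.cast_ofNat] at hlog
  intro y hy hkey
  have hlog2 : (1:ℝ)/2 ≤ Real.log (2 + y) := by
    have h2y : Real.log 2 ≤ Real.log (2 + y) := Real.log_le_log (by norm_num) (by linarith)
    linarith [Real.log_two_gt_d9]
  have hw : (0:ℝ) < 1 / Real.sqrt (r * l) := by positivity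
  have hLnn : (0:ℝ) ≤ Real.log (2 + 1 / (1 + Real.cos (phiK l r t))) := by
    apply Real.log_nonneg
    have : (0:ℝ) ≤ 1 / (1 + Real.cos (phiK l r t)) := by positivity
    linarith
  have h28 : 2 * (3 + Real.log (2 + 1 / (1 + Real.cos (phiK l r t))))
      ≤ 28 * Real.log (2 + y) := by nlinarith
  calc (∫ ψ in (-(phiK l r t))..(phiK l r t), K1 l ψ r t)
      = 2 * ∫ τ in Set.Ioo (0:ℝ) 1, K2 l τ r t := hLHS
    _ ≤ 2 * ((1 / Real.sqrt (r * l)) *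
          (3 + Real.log (2 + 1 / (1 + Real.cos (phiK l r t))))) := by
        linarith [hS]
    _ = (1 / Real.sqrt (r * l)) *
          (2 * (3 + Real.log (2 + 1 / (1 + Real.cos (phiK l r t))))) := by ring
    _ ≤ (1 / Real.sqrt (r * l)) * (28 * Real.log (2 + y)) :=
        mul_le_mul_of_nonneg_left h28 hw.le
    _ = 28 / Real.sqrt (r * l) * Real.log (2 + y) := by ring
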